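/- arXiv:2307.09849 — 8 statements merged into one kernel-verified Lean document; each statement's English description precedes it below -/
import Mathlib

section
/- Let A be a complex Banach *-algebra with identity and let a ∈ A. If a is *-DMP (i.e., there exists n ≥ 1 such that aⁿ has both a Moore–Penrose inverse and a group inverse and (aⁿ)† = (aⁿ)#), then a is Drazin invertible and the spectral idempotent a^π = 1 − a a^D is a projection (i.e., (a^π)² = a^π = (a^π)*). -/
/-- Moore–Penrose inverse. -/
def IsMP {A : Type*} [Ring A] [StarRing A] (a x : A) : Prop :=
  a * x * a = a ∧ x * a * x = x ∧ star (a * x) = a * x ∧ star (x * a) = x * a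

/-- Group inverse. -/
def IsGroupInv {A : Type*} [Ring A] (a x : A) : Prop :=
  a * x * a = a ∧ x * a * x = x ∧ a * x = x * a

/-- `a` is *-DMP: some power `a ^ n` (`n ≥ 1`) has a common Moore–Penrose and group inverse. -/
def IsStarDMP {A : Type*} [Ring A] [StarRing A] (a : A) : Prop :=
  ∃ n : ℕ, 1 ≤ n ∧ ∃ x : A, IsMP (a ^ n) x ∧ IsGroupInv (a ^ n) x

/-- `x` is the Drazin inverse of `a` (with some index `k`). -/
def IsDrazin {A : Type*} [Ring A] (a x : A) : Prop :=
  ∃ k : ℕ, x * a ^ (k + 1) = a ^ k ∧ a * x ^ 2 = x ∧ a * x = x * a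

/-- `x` is the pseudo core inverse of `a`. -/
def IsPCore {A : Type*} [Ring A] [StarRing A] (a x : A) : Prop :=
  ∃ k : ℕ, x * a ^ (k + 1) = a ^ k ∧ a * x ^ 2 = x ∧ star (a * x) = a * x

/-- EP element: common group and Moore–Penrose inverse. -/
def IsEP {A : Type*} [Ring A] [StarRing A] (a : A) : Prop :=
  ∃ x : A, IsMP a x ∧ IsGroupInv a x

/-- Double commutant property of the group inverse. -/
lemma groupInv_comm {A : Type*} [Ring A] {b x c : A}
    (h1 : b * x * b = b) (h2 : x * b * x = x) (h3 : b * x = x * b)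
    (hc : c * b = b * c) : c * x = x * c := by
  have hxxb : x * x * b = x := by rw [mul_assoc, ← h3, ← mul_assoc, h2]
  have hbbx : b * b * x = b := by rw [mul_assoc, h3, ← mul_assoc, h1]
  have hbxx : b * x * x = x := by rw [h3, h2]
  have e1 : x * c = b * x * (c * x) := by
    calc x * c = x * x * b * c := by rw [hxxb]
      _ = x * x * (c * b) := by rw [mul_assoc, ← hc]
      _ = x * x * (c * (b * b * x)) := by rw [hbbx]
      _ = x * x * (c * b * (b * x)) := by noncomm_ring
      _ = x * x * (b * c * (b * x)) := by rw [hc]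
      _ = x * x * (b * (c * b) * x) := by noncomm_ring
      _ = x * x * (b * (b * c) * x) := by rw [hc]
      _ = x * x * b * b * (c * x) := by noncomm_ring
      _ = x * b * (c * x) := by rw [hxxb]
      _ = b * x * (c * x) := by rw [← h3]
  have e2 : b * x * c = c * (b * x) := by
    calc b * x * c = b * (b * x * (c * x)) := by rw [mul_assoc, e1]
      _ = b * b * x * (c * x) := by noncomm_ring
      _ = b * (c * x) := by rw [hbbx]
      _ = c * b * x := by rw [← mul_assoc, hc]
      _ = c * (b * x) := by rw [mul_assoc]
  calc c * x = c * (b * x * x) := by rw [hbxx]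
    _ = b * x * c * x := by rw [← mul_assoc, ← e2]
    _ = b * x * (c * x) := by rw [mul_assoc]
    _ = x * c := e1.symm

variable {A : Type*} [NormedRing A] [StarRing A] [NormedAlgebra ℂ A] [CompleteSpace A]

theorem stmt0 (a : A) (h : IsStarDMP a) :
    ∃ aD : A, IsDrazin a aD ∧
      (1 - a * aD) * (1 - a * aD) = 1 - a * aD ∧ star (1 - a * aD) = 1 - a * aD := by
  obtain ⟨n, hn, x, ⟨hg1, hg2, hm3, _⟩, ⟨_, _, hg3⟩⟩ := h
  have hab : a * a ^ n = a ^ n * a := ((Commute.refl a).pow_right n).eq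
  have hxa : a * x = x * a := groupInv_comm hg1 hg2 hg3 hab
  have cax : Commute a x := hxa
  have hbbx : a ^ n * a ^ n * x = a ^ n := by rw [mul_assoc, hg3, ← mul_assoc, hg1]
  have hbxx : a ^ n * x * x = x := by rw [hg3, hg2]
  have han : a * a ^ (n - 1) = a ^ n := by
    rw [← pow_succ']; congr 1; omega
  have han2 : a ^ (n - 1) * a = a ^ n := by
    rw [← pow_succ]; congr 1; omega
  have hswap : x * a ^ (n - 1) = a ^ (n - 1) * x := (cax.symm.pow_right (n - 1)).eq
  have hswap1 : x * a ^ (n + 1) = a ^ (n + 1) * x := (cax.symm.pow_right (n + 1)).eq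
  have hpp : a ^ n * a ^ (n - 1) = a ^ (n - 1) * a ^ n := ((Commute.refl a).pow_pow n (n - 1)).eq
  have hp : a * (a ^ (n - 1) * x) = a ^ n * x := by rw [← mul_assoc, han]
  have hpp2 : a ^ n * x * (a ^ n * x) = a ^ n * x := by rw [← mul_assoc, hg1]
  refine ⟨a ^ (n - 1) * x, ⟨n, ?_, ?_, ?_⟩, ?_, ?_⟩
  · calc a ^ (n - 1) * x * a ^ (n + 1) = a ^ (n - 1) * (a ^ (n + 1) * x) := by
          rw [mul_assoc, hswap1]
      _ = a ^ (n - 1) * a ^ (n + 1) * x := by rw [mul_assoc]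
      _ = a ^ n * a ^ n * x := by rw [← pow_add, ← pow_add]; congr 2; omega
      _ = a ^ n := hbbx
  · calc a * (a ^ (n - 1) * x) ^ 2 = a * a ^ (n - 1) * (x * a ^ (n - 1)) * x := by
          rw [pow_two]; noncomm_ring
      _ = a ^ n * (a ^ (n - 1) * x) * x := by rw [han, hswap]
      _ = a ^ n * a ^ (n - 1) * (x * x) := by noncomm_ring
      _ = a ^ (n - 1) * (a ^ n * x * x) := by rw [hpp]; noncomm_ring
      _ = a ^ (n - 1) * x := by rw [hbxx]
  · calc a * (a ^ (n - 1) * x) = a ^ n * x := hp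
      _ = a ^ (n - 1) * a * x := by rw [han2]
      _ = a ^ (n - 1) * (a * x) := by rw [mul_assoc]
      _ = a ^ (n - 1) * (x * a) := by rw [hxa]
      _ = a ^ (n - 1) * x * a := by rw [mul_assoc]
  · rw [hp, one_sub_mul, mul_one_sub, hpp2, sub_self, sub_zero]
  · rw [hp, star_sub, star_one, hm3]
end

section
/- Let A be a complex Banach *-algebra with identity and let a ∈ A. Then a is *-DMP if and only if a has a pseudo core inverse a^ⓓ and a^ⓓ = a^D (the Drazin inverse of a). -/
lemma idem_pow_succ {M : Type*} [Monoid M] {e : M} (h : e * e = e) (k : ℕ) :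
    e ^ (k + 1) = e := by
  induction k with
  | zero => simp
  | succ k ih => rw [pow_succ, ih, h]

variable {A : Type*} [NormedRing A] [StarRing A] [NormedAlgebra ℂ A] [CompleteSpace A]

theorem stmt1 (a : A) :
    IsStarDMP a ↔ ∃ x : A, IsPCore a x ∧ IsDrazin a x := by
  constructor
  · rintro ⟨n, hn, x, ⟨m1, m2, m3, m4⟩, ⟨g1, g2, g3⟩⟩
    have hab : a * a ^ n = a ^ n * a := ((Commute.refl a).pow_right n).eq
    have hbe : a ^ n * (a ^ n * x) = a ^ n := by
      rw [g3, ← mul_assoc]; exact g1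
    have hea : (a ^ n * x) * a = x * a * a ^ n := by
      rw [g3, mul_assoc, ← hab, ← mul_assoc]
    have heae : (a ^ n * x) * a * (a ^ n * x) = x * a * a ^ n := by
      rw [hea, mul_assoc (x * a), hbe]
    have hae' : a * (a ^ n * x) = a ^ n * (a * x) := by
      rw [← mul_assoc, hab, mul_assoc]
    have h5 : (a ^ n * x) * (a ^ n * (a * x)) = a ^ n * (a * x) := by
      rw [← mul_assoc, g1]
    have hcomm_e : a * (a ^ n * x) = (a ^ n * x) * a := by
      calc a * (a ^ n * x) = (a ^ n * x) * (a * (a ^ n * x)) := by rw [hae', h5]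
        _ = (a ^ n * x) * a * (a ^ n * x) := by rw [← mul_assoc]
        _ = x * a * a ^ n := heae
        _ = (a ^ n * x) * a := hea.symm
    have hex : (a ^ n * x) * x = x := by rw [g3]; exact m2
    have hxe : x * (a ^ n * x) = x := by rw [← mul_assoc]; exact m2
    have hax : a * x = x * a := by
      have h6 : x * a = a * x := by
        calc x * a = (x * (a ^ n * x)) * a := by rw [hxe]
          _ = x * ((a ^ n * x) * a) := mul_assoc _ _ _
          _ = x * (a * (a ^ n * x)) := by rw [← hcomm_e]
          _ = x * (a ^ n * (a * x)) := by rw [hae']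
          _ = (x * a ^ n) * (a * x) := by rw [← mul_assoc]
          _ = (a ^ n * x) * (a * x) := by rw [← g3]
          _ = ((a ^ n * x) * a) * x := by rw [← mul_assoc]
          _ = (a * (a ^ n * x)) * x := by rw [hcomm_e]
          _ = a * ((a ^ n * x) * x) := mul_assoc _ _ _
          _ = a * x := by rw [hex]
      exact h6.symm
    have hc : Commute a x := hax
    have hn1 : n - 1 + 1 = n := Nat.succ_pred_eq_of_pos hn
    have han : a ^ (n - 1) * a = a ^ n := by rw [← pow_succ, hn1]
    have han' : a * a ^ (n - 1) = a ^ n := by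
      rw [((Commute.refl a).pow_right (n - 1)).eq, han]
    have hay : a * (a ^ (n - 1) * x) = a ^ n * x := by rw [← mul_assoc, han']
    have hya : (a ^ (n - 1) * x) * a = a ^ n * x := by
      rw [mul_assoc, ← hax, ← mul_assoc, han]
    have hce : Commute (a ^ (n - 1)) (a ^ n * x) :=
      Commute.pow_left (hcomm_e : Commute a (a ^ n * x)) (n - 1)
    have cond1 : (a ^ (n - 1) * x) * a ^ (n + 1) = a ^ n := by
      have h2n : a ^ (n - 1) * a ^ (n + 1) = a ^ n * a ^ n := by
        rw [← pow_add, ← pow_add]; congr 1; omega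
      calc (a ^ (n - 1) * x) * a ^ (n + 1)
          = a ^ (n - 1) * (x * a ^ (n + 1)) := mul_assoc _ _ _
        _ = a ^ (n - 1) * (a ^ (n + 1) * x) := by rw [(hc.symm.pow_right (n + 1)).eq]
        _ = (a ^ (n - 1) * a ^ (n + 1)) * x := (mul_assoc _ _ _).symm
        _ = a ^ n * (a ^ n * x) := by rw [h2n, mul_assoc]
        _ = a ^ n * (x * a ^ n) := by rw [g3]
        _ = a ^ n * x * a ^ n := (mul_assoc _ _ _).symm
        _ = a ^ n := g1
    have cond2 : a * (a ^ (n - 1) * x) ^ 2 = a ^ (n - 1) * x := by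
      calc a * (a ^ (n - 1) * x) ^ 2
          = a * ((a ^ (n - 1) * x) * (a ^ (n - 1) * x)) := by rw [sq]
        _ = (a * (a ^ (n - 1) * x)) * (a ^ (n - 1) * x) := (mul_assoc _ _ _).symm
        _ = (a ^ n * x) * (a ^ (n - 1) * x) := by rw [hay]
        _ = ((a ^ n * x) * a ^ (n - 1)) * x := by rw [← mul_assoc]
        _ = (a ^ (n - 1) * (a ^ n * x)) * x := by rw [← hce.eq]
        _ = a ^ (n - 1) * ((a ^ n * x) * x) := mul_assoc _ _ _
        _ = a ^ (n - 1) * x := by rw [hex]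
    have cond3 : star (a * (a ^ (n - 1) * x)) = a * (a ^ (n - 1) * x) := by
      rw [hay]; exact m3
    exact ⟨a ^ (n - 1) * x, ⟨n, cond1, cond2, cond3⟩,
      ⟨n, cond1, cond2, hay.trans hya.symm⟩⟩
  · rintro ⟨x, ⟨k, h1, h2, h3⟩, ⟨k', h1', h2', hcomm⟩⟩
    have hc : Commute a x := hcomm
    have hxax : x * a * x = x := by
      rw [← hcomm, mul_assoc, ← pow_two]; exact h2
    have he : (a * x) * (a * x) = a * x := by
      rw [mul_assoc, ← mul_assoc x a x, hxax]
    have hen : (a * x) ^ (k + 1) = a * x := idem_pow_succ he k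
    have hbg : a ^ (k + 1) * x ^ (k + 1) = a * x := by
      rw [← hc.mul_pow]; exact hen
    have hgb : x ^ (k + 1) * a ^ (k + 1) = a * x := by
      rw [((hc.pow_pow (k + 1) (k + 1)).eq).symm]; exact hbg
    have heb : (a * x) * a ^ (k + 1) = a ^ (k + 1) := by
      rw [mul_assoc, h1, ← pow_succ']
    have hxsucc : x ^ (k + 1) = x * x ^ k := (pow_succ' x k)
    have heg : (a * x) * x ^ (k + 1) = x ^ (k + 1) := by
      calc (a * x) * x ^ (k + 1) = (a * x) * (x * x ^ k) := by rw [hxsucc]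
        _ = a * (x * x) * x ^ k := by rw [mul_assoc, ← mul_assoc x x (x ^ k), ← mul_assoc]
        _ = a * x ^ 2 * x ^ k := by rw [← pow_two]
        _ = x * x ^ k := by rw [h2]
        _ = x ^ (k + 1) := hxsucc.symm
    refine ⟨k + 1, Nat.succ_le_succ (Nat.zero_le k), x ^ (k + 1), ?_, ?_⟩
    · exact ⟨by rw [hbg, heb], by rw [hgb, heg], by rw [hbg]; exact h3,
        by rw [hgb]; exact h3⟩
    · exact ⟨by rw [hbg, heb], by rw [hgb, heg], hbg.trans hgb.symm⟩
end

section
/- Let A be a complex Banach *-algebra with identity, and let a, b ∈ A be *-DMP elements. If ab = ba = 0 and a* b = 0, then a + b is *-DMP. -/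
section Aux

variable {R : Type*} [Ring R] [StarRing R]

/-- Powers of a common MP/group inverse pair. -/
lemma aux_pow (c x : R) (h1 : c * x * c = c) (h2 : x * c * x = x) (h3 : c * x = x * c)
    (m : ℕ) (hm : 1 ≤ m) :
    c ^ m * x ^ m = c * x ∧ x ^ m * c ^ m = x * c ∧
    c ^ m * x ^ m * c ^ m = c ^ m ∧ x ^ m * c ^ m * x ^ m = x ^ m := by
  induction m, hm using Nat.le_induction with
  | base =>
    rw [pow_one, pow_one]
    exact ⟨rfl, rfl, h1, h2⟩
  | succ m hm ih =>
    obtain ⟨e1, e2, e3, e4⟩ := ih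
    have hcx : c ^ (m + 1) * x ^ (m + 1) = c * x := by
      rw [pow_succ' c m, pow_succ x m, mul_assoc, ← mul_assoc (c ^ m), e1, h3, h2]
      exact h3
    have hxc : x ^ (m + 1) * c ^ (m + 1) = x * c := by
      rw [pow_succ' x m, pow_succ c m, mul_assoc, ← mul_assoc (x ^ m), e2, ← h3, h1]
      exact h3.symm
    refine ⟨hcx, hxc, ?_, ?_⟩
    · rw [hcx, pow_succ' c m, ← mul_assoc, h1]
    · rw [hxc, pow_succ' x m, ← mul_assoc, h2]

lemma aux_add (p u q v : R)
    (hp1 : p * u * p = p) (hp2 : u * p * u = u) (hp3 : p * u = u * p)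
    (hq1 : q * v * q = q) (hq2 : v * q * v = v) (hq3 : q * v = v * q)
    (hpq : p * q = 0) (hqp : q * p = 0)
    (hps : star (p * u) = p * u) (hqs : star (q * v) = q * v) :
    IsMP (p + q) (u + v) ∧ IsGroupInv (p + q) (u + v) := by
  have hu1 : p * (u * u) = u := by rw [← mul_assoc, hp3, hp2]
  have hu2 : u * u * p = u := by rw [mul_assoc, ← hp3, ← mul_assoc, hp2]
  have hv1 : q * (v * v) = v := by rw [← mul_assoc, hq3, hq2]
  have hv2 : v * v * q = v := by rw [mul_assoc, ← hq3, ← mul_assoc, hq2]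
  have qu0 : q * u = 0 := by rw [← hu1, ← mul_assoc, hqp, zero_mul]
  have uq0 : u * q = 0 := by rw [← hu2, mul_assoc, hpq, mul_zero]
  have pv0 : p * v = 0 := by rw [← hv1, ← mul_assoc, hpq, zero_mul]
  have vp0 : v * p = 0 := by rw [← hv2, mul_assoc, hqp, mul_zero]
  have key : (p + q) * (u + v) = p * u + q * v := by
    rw [add_mul, mul_add, mul_add, pv0, qu0]; abel
  have key' : (u + v) * (p + q) = u * p + v * q := by
    rw [add_mul, mul_add, mul_add, uq0, vp0]; abel
  have m1 : (p + q) * (u + v) * (p + q) = p + q := by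
    rw [key, add_mul, mul_add, mul_add, hp1, hq1, mul_assoc p u q, uq0, mul_zero,
      mul_assoc q v p, vp0, mul_zero, add_zero, zero_add]
  have m2 : (u + v) * (p + q) * (u + v) = u + v := by
    rw [key', add_mul, mul_add, mul_add, mul_assoc u p v, pv0, mul_zero,
      mul_assoc v q u, qu0, mul_zero, add_zero, zero_add, hp2, hq2]
  have m3 : (p + q) * (u + v) = (u + v) * (p + q) := by rw [key, key', hp3, hq3]
  have m4 : star ((p + q) * (u + v)) = (p + q) * (u + v) := by
    rw [key, star_add, hps, hqs]
  exact ⟨⟨m1, m2, m4, by rw [← m3]; exact m4⟩, m1, m2, m3⟩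

lemma aux_pow_mul_zero (a b : R) (hab : a * b = 0) (N : ℕ) (hN : 1 ≤ N) :
    a ^ N * b ^ N = 0 := by
  obtain ⟨k, rfl⟩ : ∃ k, N = k + 1 := ⟨N - 1, (Nat.succ_pred_eq_of_pos hN).symm⟩
  rw [pow_succ, pow_succ', mul_assoc, ← mul_assoc a, hab, zero_mul, mul_zero]

lemma aux_binom (a b : R) (hab : a * b = 0) (hba : b * a = 0) (N : ℕ) (hN : 1 ≤ N) :
    (a + b) ^ N = a ^ N + b ^ N := by
  obtain ⟨k, rfl⟩ : ∃ k, N = k + 1 := ⟨N - 1, (Nat.succ_pred_eq_of_pos hN).symm⟩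
  clear hN
  induction k with
  | zero => simp
  | succ k ih =>
    have h1 : a ^ (k + 1) * b = 0 := by rw [pow_succ, mul_assoc, hab, mul_zero]
    have h2 : b ^ (k + 1) * a = 0 := by rw [pow_succ, mul_assoc, hba, mul_zero]
    rw [pow_succ, ih, add_mul, mul_add, mul_add, h1, h2, add_zero, zero_add,
      ← pow_succ, ← pow_succ]

end Aux

variable {A : Type*} [NormedRing A] [StarRing A] [NormedAlgebra ℂ A] [CompleteSpace A]

theorem stmt3 (a b : A) (ha : IsStarDMP a) (hb : IsStarDMP b)
    (hab : a * b = 0) (hba : b * a = 0) (hsb : star a * b = 0) :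
    IsStarDMP (a + b) := by
  obtain ⟨n, hn, x, ⟨_, _, hx4, hx5⟩, hx1, hx2, hx3⟩ := ha
  obtain ⟨m, hm, y, ⟨_, _, hy4, hy5⟩, hy1, hy2, hy3⟩ := hb
  have hN1 : 1 ≤ n * m := Nat.one_le_iff_ne_zero.mpr (by positivity)
  obtain ⟨px1, px2, px3, px4⟩ := aux_pow (a ^ n) x hx1 hx2 hx3 m hm
  obtain ⟨py1, py2, py3, py4⟩ := aux_pow (b ^ m) y hy1 hy2 hy3 n hn
  rw [← pow_mul] at px1 px2 px3 px4
  rw [← pow_mul, mul_comm m n] at py1 py2 py3 py4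
  set p := a ^ (n * m) with hp
  set q := b ^ (n * m) with hq
  set u := x ^ m
  set v := y ^ n
  have hp3 : p * u = u * p := by rw [px1, px2, hx3]
  have hq3 : q * v = v * q := by rw [py1, py2, hy3]
  have hpq : p * q = 0 := aux_pow_mul_zero a b hab (n * m) hN1
  have hqp : q * p = 0 := aux_pow_mul_zero b a hba (n * m) hN1
  have hps : star (p * u) = p * u := by rw [px1]; exact hx4
  have hqs : star (q * v) = q * v := by rw [py1]; exact hy4
  have hmain := aux_add p u q v px3 px4 hp3 py3 py4 hq3 hpq hqp hps hqs
  refine ⟨n * m, hN1, u + v, ?_⟩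
  rw [show (a + b) ^ (n * m) = p + q from aux_binom a b hab hba (n * m) hN1]
  exact hmain
end

section
/- Let A be a complex Banach *-algebra with identity, and let a, b ∈ A be *-DMP elements. If ab = ba and a* b = b a*, then ab is *-DMP. -/
section Helpers
variable {R : Type*} [Ring R]

/-- Double commutant property of the group inverse. -/
lemma groupInv_comm_s4 {c x u : R} (h1 : c*x*c = c) (h2 : x*c*x = x) (h3 : c*x = x*c)
    (hu : u*c = c*u) : u*x = x*u := by
  have hce : c*(c*x) = c := by rw [h3, ← mul_assoc, h1]
  have hxe : x*(c*x) = x := by rw [← mul_assoc, h2]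
  have hee : (c*x)*(c*x) = c*x := by
    have : (c*x)*(c*x) = (c*x*c)*x := by noncomm_ring
    rw [this, h1]
  have hex : (c*x)*x = x := by rw [h3, h2]
  -- u commutes with the idempotent e = c*x
  have hue : u*(c*x) = (c*x)*u := by
    have k1 : u*(c*x) = (c*x)*(u*(c*x)) := by
      calc u*(c*x) = (u*c)*x := by noncomm_ring
        _ = (c*u)*x := by rw [hu]
        _ = ((c*x*c)*u)*x := by rw [h1]
        _ = (c*x)*((c*u)*x) := by noncomm_ring
        _ = (c*x)*((u*c)*x) := by rw [hu]
        _ = (c*x)*(u*(c*x)) := by noncomm_ring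
    have k2 : (c*x)*(u*(c*x)) = (c*x)*u := by
      calc (c*x)*(u*(c*x)) = (x*c)*(u*(c*x)) := by rw [h3]
        _ = x*((c*u)*(c*x)) := by noncomm_ring
        _ = x*((u*c)*(c*x)) := by rw [hu]
        _ = x*(u*(c*(c*x))) := by noncomm_ring
        _ = x*(u*c) := by rw [hce]
        _ = x*(c*u) := by rw [hu]
        _ = (x*c)*u := by noncomm_ring
        _ = (c*x)*u := by rw [h3]
    exact k1.trans k2
  -- w = c + 1 - e is invertible with inverse v = x + 1 - e
  have hwv : (c + 1 - c*x) * (x + 1 - c*x) = 1 := by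
    have : (c + 1 - c*x) * (x + 1 - c*x)
        = c*x + c - c*(c*x) + (x + 1 - c*x) - ((c*x)*x + c*x - (c*x)*(c*x)) := by noncomm_ring
    rw [this, hce, hex, hee]; noncomm_ring
  have hvw : (x + 1 - c*x) * (c + 1 - c*x) = 1 := by
    have : (x + 1 - c*x) * (c + 1 - c*x)
        = x*c + x - x*(c*x) + (c + 1 - c*x) - ((c*x)*c + c*x - (c*x)*(c*x)) := by noncomm_ring
    rw [this, hxe, h1, hee, ← h3]; noncomm_ring
  have huw : u*(c + 1 - c*x) = (c + 1 - c*x)*u := by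
    have l : u*(c + 1 - c*x) = u*c + u - u*(c*x) := by noncomm_ring
    have r : (c + 1 - c*x)*u = c*u + u - (c*x)*u := by noncomm_ring
    rw [l, r, hu, hue]
  have huv : u*(x + 1 - c*x) = (x + 1 - c*x)*u := by
    calc u*(x + 1 - c*x) = ((x + 1 - c*x)*(c + 1 - c*x))*(u*(x + 1 - c*x)) := by
          rw [hvw, one_mul]
      _ = (x + 1 - c*x)*(((c + 1 - c*x)*u)*(x + 1 - c*x)) := by noncomm_ring
      _ = (x + 1 - c*x)*((u*(c + 1 - c*x))*(x + 1 - c*x)) := by rw [huw]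
      _ = ((x + 1 - c*x)*u)*((c + 1 - c*x)*(x + 1 - c*x)) := by noncomm_ring
      _ = (x + 1 - c*x)*u := by rw [hwv, mul_one]
  -- x = v * e
  have hx : (x + 1 - c*x)*(c*x) = x := by
    have : (x + 1 - c*x)*(c*x) = x*(c*x) + c*x - (c*x)*(c*x) := by noncomm_ring
    rw [this, hxe, hee]; noncomm_ring
  calc u*x = u*((x + 1 - c*x)*(c*x)) := by rw [hx]
    _ = (u*(x + 1 - c*x))*(c*x) := by noncomm_ring
    _ = ((x + 1 - c*x)*u)*(c*x) := by rw [huv]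
    _ = (x + 1 - c*x)*(u*(c*x)) := by noncomm_ring
    _ = (x + 1 - c*x)*((c*x)*u) := by rw [hue]
    _ = ((x + 1 - c*x)*(c*x))*u := by noncomm_ring
    _ = x*u := by rw [hx]

variable [StarRing R]

/-- Powers of an EP element are EP. -/
lemma pow_EP {c x : R} (hmp : IsMP c x) (hg : IsGroupInv c x) (k : ℕ) (hk : 1 ≤ k) :
    IsMP (c^k) (x^k) ∧ IsGroupInv (c^k) (x^k) := by
  obtain ⟨h1, h2, h3, h4⟩ := hmp
  obtain ⟨-, -, hcomm⟩ := hg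
  have hC : Commute c x := hcomm
  have hee : (c*x)*(c*x) = c*x := by
    have : (c*x)*(c*x) = (c*x*c)*x := by noncomm_ring
    rw [this, h1]
  have hidem : ∀ j : ℕ, 1 ≤ j → (c*x)^j = c*x := by
    intro j hj
    induction j with
    | zero => omega
    | succ n ih =>
      rcases Nat.eq_zero_or_pos n with h | h
      · subst h; simp
      · rw [pow_succ, ih h, hee]
  have hpow : c^k * x^k = c*x := by rw [← hC.mul_pow, hidem k hk]
  have hpow' : x^k * c^k = x*c := by
    rw [← hC.symm.mul_pow, ← hcomm, hidem k hk, hcomm]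
  obtain ⟨n, rfl⟩ : ∃ n, k = n + 1 := ⟨k - 1, by omega⟩
  have e1 : c^(n+1) * x^(n+1) * c^(n+1) = c^(n+1) := by
    rw [hpow]
    calc c*x*c^(n+1) = (c*x*c)*c^n := by rw [pow_succ']; noncomm_ring
      _ = c*c^n := by rw [h1]
      _ = c^(n+1) := (pow_succ' c n).symm
  have e2 : x^(n+1) * c^(n+1) * x^(n+1) = x^(n+1) := by
    rw [hpow']
    calc x*c*x^(n+1) = (x*c*x)*x^n := by rw [pow_succ']; noncomm_ring
      _ = x*x^n := by rw [h2]
      _ = x^(n+1) := (pow_succ' x n).symm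
  refine ⟨⟨e1, e2, ?_, ?_⟩, e1, e2, ?_⟩
  · rw [hpow, h3]
  · rw [hpow', h4]
  · rw [hpow, hpow', hcomm]

/-- The product of two commuting EP elements is EP with inverse the product of inverses. -/
lemma mul_EP {c d x y : R} (hc : IsMP c x ∧ IsGroupInv c x) (hd : IsMP d y ∧ IsGroupInv d y)
    (hcd : c*d = d*c) : IsMP (c*d) (x*y) ∧ IsGroupInv (c*d) (x*y) := by
  obtain ⟨⟨c1, c2, c3, c4⟩, -, -, ccomm⟩ := hc
  obtain ⟨⟨d1, d2, d3, d4⟩, -, -, dcomm⟩ := hd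
  have hcy : c*y = y*c := groupInv_comm_s4 d1 d2 dcomm hcd
  have hdx : d*x = x*d := groupInv_comm_s4 c1 c2 ccomm hcd.symm
  have hxy : x*y = y*x := groupInv_comm_s4 d1 d2 dcomm hdx.symm
  have Ccd : Commute c d := hcd
  have Ccx : Commute c x := ccomm
  have Ccy : Commute c y := hcy
  have Cdx : Commute d x := hdx
  have Cdy : Commute d y := dcomm
  have Cxy : Commute x y := hxy
  have r1 : (c*d)*(x*y) = (c*x)*(d*y) := Cdx.mul_mul_mul_comm c y
  have r2 : (x*y)*(c*d) = (x*c)*(y*d) := Ccy.symm.mul_mul_mul_comm x d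
  have g1 : (c*d)*(x*y)*(c*d) = c*d := by
    rw [r1]
    have h : Commute (d*y) c := Ccd.symm.mul_left Ccy.symm
    rw [h.mul_mul_mul_comm (c*x) d, c1, d1]
  have g2 : (x*y)*(c*d)*(x*y) = x*y := by
    rw [r2]
    have h : Commute (y*d) x := Cxy.symm.mul_left Cdx
    rw [h.mul_mul_mul_comm (x*c) y, c2, d2]
  have g3 : (c*d)*(x*y) = (x*y)*(c*d) := by
    rw [r1, r2, ccomm, dcomm]
  refine ⟨⟨g1, g2, ?_, ?_⟩, g1, g2, g3⟩
  · have hcomm2 : Commute (c*x) (d*y) := (Ccd.mul_right Ccy).mul_left (Cdx.symm.mul_right Cxy)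
    rw [r1, star_mul, c3, d3, hcomm2.eq]
  · have hcomm3 : Commute (y*d) (x*c) :=
      (Cxy.symm.mul_right Ccy.symm).mul_left (Cdx.mul_right Ccd.symm)
    rw [r2, star_mul, c4, d4, hcomm3.eq]

end Helpers

variable {A : Type*} [NormedRing A] [StarRing A] [NormedAlgebra ℂ A] [CompleteSpace A]

theorem stmt4 (a b : A) (ha : IsStarDMP a) (hb : IsStarDMP b)
    (hab : a * b = b * a) (hsb : star a * b = b * star a) :
    IsStarDMP (a * b) := by
  obtain ⟨n, hn, x, hax⟩ := ha
  obtain ⟨m, hm, y, hby⟩ := hb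
  refine ⟨n*m, Nat.one_le_iff_ne_zero.mpr (by positivity), ?_⟩
  have hCab : Commute a b := hab
  have hc := pow_EP hax.1 hax.2 m hm
  have hd := pow_EP hby.1 hby.2 n hn
  rw [← pow_mul] at hc
  rw [← pow_mul] at hd
  have hdm : b ^ (m*n) = b ^ (n*m) := by rw [Nat.mul_comm]
  rw [hdm] at hd
  have hcd : a^(n*m) * b^(n*m) = b^(n*m) * a^(n*m) := (hCab.pow_pow (n*m) (n*m)).eq
  have key := mul_EP hc hd hcd
  have hmulpow : (a*b)^(n*m) = a^(n*m) * b^(n*m) := hCab.mul_pow (n*m)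
  rw [hmulpow]
  exact ⟨x^m * y^n, key⟩
end

section
/- Let A be a complex Banach *-algebra with identity, and let a, b ∈ A be *-DMP elements such that ab = ba and a* b = b a*. Then a + b is *-DMP if and only if 1 + a^D b is *-DMP, where a^D denotes the Drazin inverse of a. -/
section Helpers
variable {A : Type*} [Ring A]

lemma drazin_aux1 {a x : A} {k : ℕ} (h1 : x * a ^ (k + 1) = a ^ k)
    {m : ℕ} (hm : k ≤ m) : x * a ^ (m + 1) = a ^ m := by
  obtain ⟨j, rfl⟩ := Nat.exists_eq_add_of_le hm
  induction j with
  | zero => simpa using h1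
  | succ j ih =>
      have e1 : k + (j + 1) + 1 = (k + j + 1) + 1 := by omega
      have e2 : k + (j + 1) = (k + j) + 1 := by omega
      rw [e1, e2, pow_succ (a := a) (n := k + j + 1), ← mul_assoc,
        ih (Nat.le_add_right _ _), ← pow_succ]

lemma drazin_aux2 {a x : A} (h2 : a * x ^ 2 = x) (h3 : a * x = x * a) :
    ∀ m : ℕ, x = a ^ m * x ^ (m + 1) := by
  intro m
  induction m with
  | zero => simp
  | succ m ih =>
      have e1 : x ^ (m + 1 + 1) = x ^ 2 * x ^ m := by
        rw [← pow_add]; congr 1; omega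
      calc x = a ^ m * x ^ (m + 1) := ih
        _ = a ^ m * ((a * x ^ 2) * x ^ m) := by rw [h2, ← pow_succ']
        _ = (a ^ m * a) * (x ^ 2 * x ^ m) := by noncomm_ring
        _ = a ^ (m + 1) * x ^ (m + 1 + 1) := by rw [← pow_succ, e1]

lemma drazin_comm {a x c : A} (hd : IsDrazin a x) (hc : c * a = a * c) :
    c * x = x * c := by
  obtain ⟨k, h1, h2, h3⟩ := hd
  have hax : Commute a x := h3
  have hca : Commute c a := hc
  -- basic facts
  have hpx : a ^ (k + 1) * x = a ^ k := by
    rw [(hax.pow_left (k + 1)).eq]; exact h1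
  have he : a * x = a ^ (k + 1) * x ^ (k + 1) := by
    calc a * x = a * (a ^ k * x ^ (k + 1)) := by rw [← drazin_aux2 h2 h3 k]
      _ = (a * a ^ k) * x ^ (k + 1) := by noncomm_ring
      _ = a ^ (k + 1) * x ^ (k + 1) := by rw [← pow_succ']
  have he' : a * x = x ^ (k + 1) * a ^ (k + 1) := by
    rw [he, (hax.pow_pow (k+1) (k+1)).eq]
  have hcpow : c * a ^ (k + 1) = a ^ (k + 1) * c := (hca.pow_right (k + 1)).eq
  have hex : (a * x) * x = x := by
    calc (a * x) * x = a * x ^ 2 := by rw [sq]; noncomm_ring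
      _ = x := h2
  have f4 : a ^ (k + 1) * (a * x) = a ^ (k + 1) := by
    calc a ^ (k + 1) * (a * x) = (a ^ (k + 1) * a) * x := by noncomm_ring
      _ = (a * a ^ (k + 1)) * x := by rw [← pow_succ, ← pow_succ']
      _ = a * (a ^ (k + 1) * x) := by noncomm_ring
      _ = a * a ^ k := by rw [hpx]
      _ = a ^ (k + 1) := (pow_succ' a k).symm
  have f4' : (a * x) * a ^ (k + 1) = a ^ (k + 1) := by
    calc (a * x) * a ^ (k + 1) = a * (x * a ^ (k + 1)) := by noncomm_ring
      _ = a * a ^ k := by rw [h1]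
      _ = a ^ (k + 1) := by rw [← pow_succ']
  have f2 : a ^ (k + 1) * (x * c) = a ^ (k + 1) * (c * x) := by
    calc a ^ (k + 1) * (x * c) = (a ^ (k + 1) * x) * c := by noncomm_ring
      _ = a ^ k * c := by rw [hpx]
      _ = c * a ^ k := ((hca.pow_right k).eq).symm
      _ = c * (a ^ (k + 1) * x) := by rw [hpx]
      _ = (c * a ^ (k + 1)) * x := by noncomm_ring
      _ = (a ^ (k + 1) * c) * x := by rw [hcpow]
      _ = a ^ (k + 1) * (c * x) := by noncomm_ring
  have f3 : x * c = (a * x) * (c * x) := by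
    calc x * c = ((a * x) * x) * c := by rw [hex]
      _ = (x ^ (k+1) * a ^ (k+1)) * (x * c) := by rw [← he']; noncomm_ring
      _ = x ^ (k+1) * (a ^ (k+1) * (x * c)) := by noncomm_ring
      _ = x ^ (k+1) * (a ^ (k+1) * (c * x)) := by rw [f2]
      _ = (x ^ (k+1) * a ^ (k+1)) * (c * x) := by noncomm_ring
      _ = (a * x) * (c * x) := by rw [← he']
  have f5 : (a * x) * c = c * (a * x) := by
    have g1 : (a * x) * c = x ^ (k+1) * (c * a ^ (k+1)) := by
      rw [he', hcpow]; noncomm_ring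
    have g2 : c * (a * x) = a ^ (k+1) * (c * x ^ (k+1)) := by
      rw [he, ← mul_assoc, hcpow]; noncomm_ring
    have g3 : ((a * x) * c) * (a * x) = (a * x) * c := by
      calc ((a * x) * c) * (a * x) = x ^ (k+1) * (c * (a ^ (k+1) * (a * x))) := by
            rw [g1]; noncomm_ring
        _ = x ^ (k+1) * (c * a ^ (k+1)) := by rw [f4]
        _ = (a * x) * c := g1.symm
    have g4 : (a * x) * (c * (a * x)) = c * (a * x) := by
      calc (a * x) * (c * (a * x)) = ((a * x) * a ^ (k+1)) * (c * x ^ (k+1)) := by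
            rw [g2]; noncomm_ring
        _ = a ^ (k+1) * (c * x ^ (k+1)) := by rw [f4']
        _ = c * (a * x) := g2.symm
    calc (a * x) * c = ((a * x) * c) * (a * x) := g3.symm
      _ = (a * x) * (c * (a * x)) := by noncomm_ring
      _ = c * (a * x) := g4
  calc c * x = c * ((a * x) * x) := by rw [hex]
    _ = (c * (a * x)) * x := by noncomm_ring
    _ = ((a * x) * c) * x := by rw [f5]
    _ = (a * x) * (c * x) := by noncomm_ring
    _ = x * c := f3.symm

end Helpers

section Helpers2
variable {A : Type*} [Ring A]

lemma drazin_proj_unique {a x y : A} (hx : IsDrazin a x) (hy : IsDrazin a y) :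
    a * x = a * y := by
  obtain ⟨k, hx1, hx2, hx3⟩ := hx
  obtain ⟨l, hy1, hy2, hy3⟩ := hy
  set m := k + l with hm
  have hax : Commute a x := hx3
  have hay : Commute a y := hy3
  have hx1m : x * a ^ (m + 1) = a ^ m := drazin_aux1 hx1 (Nat.le_add_right _ _)
  have hy1m : y * a ^ (m + 1) = a ^ m := drazin_aux1 hy1 (Nat.le_add_left _ _)
  have hex : a * x = a ^ (m + 1) * x ^ (m + 1) := by
    calc a * x = a * (a ^ m * x ^ (m + 1)) := by rw [← drazin_aux2 hx2 hx3 m]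
      _ = (a * a ^ m) * x ^ (m + 1) := by noncomm_ring
      _ = a ^ (m + 1) * x ^ (m + 1) := by rw [← pow_succ']
  have hex' : a * x = x ^ (m + 1) * a ^ (m + 1) := by
    rw [hex, (hax.pow_pow (m+1) (m+1)).eq]
  have hey : a * y = a ^ (m + 1) * y ^ (m + 1) := by
    calc a * y = a * (a ^ m * y ^ (m + 1)) := by rw [← drazin_aux2 hy2 hy3 m]
      _ = (a * a ^ m) * y ^ (m + 1) := by noncomm_ring
      _ = a ^ (m + 1) * y ^ (m + 1) := by rw [← pow_succ']
  have u1 : a ^ (m + 1) * (a * y) = a ^ (m + 1) := by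
    calc a ^ (m + 1) * (a * y) = (a ^ (m + 1) * a) * y := by noncomm_ring
      _ = (a * a ^ (m + 1)) * y := by rw [← pow_succ, ← pow_succ']
      _ = a * (a ^ (m + 1) * y) := by noncomm_ring
      _ = a * (y * a ^ (m + 1)) := by rw [(hay.pow_left (m+1)).eq]
      _ = a * a ^ m := by rw [hy1m]
      _ = a ^ (m + 1) := (pow_succ' a m).symm
  have u2 : (a * x) * a ^ (m + 1) = a ^ (m + 1) := by
    calc (a * x) * a ^ (m + 1) = a * (x * a ^ (m + 1)) := by noncomm_ring
      _ = a * a ^ m := by rw [hx1m]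
      _ = a ^ (m + 1) := (pow_succ' a m).symm
  have ef1 : (a * x) * (a * y) = a * x := by
    calc (a * x) * (a * y) = x ^ (m+1) * (a ^ (m+1) * (a * y)) := by
          rw [hex']; noncomm_ring
      _ = x ^ (m+1) * a ^ (m+1) := by rw [u1]
      _ = a * x := hex'.symm
  have ef2 : (a * x) * (a * y) = a * y := by
    calc (a * x) * (a * y) = ((a * x) * a ^ (m+1)) * y ^ (m+1) := by
          rw [hey]; noncomm_ring
      _ = a ^ (m+1) * y ^ (m+1) := by rw [u2]
      _ = a * y := hey.symm
  rw [← ef1, ef2]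

end Helpers2

section Helpers3
variable {A : Type*} [Ring A] [StarRing A]

lemma pow_mul_self {A : Type*} [Monoid A] (a : A) (n : ℕ) : a ^ n * a = a * a ^ n := by
  rw [← pow_succ, ← pow_succ']

lemma isStarDMP_of_drazin {a d : A} (hd : IsDrazin a d) (hst : star (a * d) = a * d) :
    IsStarDMP a := by
  obtain ⟨k, h1, h2, h3⟩ := hd
  have hax : Commute a d := h3
  have he2 : IsIdempotentElem (a * d) := by
    show (a * d) * (a * d) = a * d
    calc (a * d) * (a * d) = (a * (d * a)) * d := by noncomm_ring
      _ = (a * (a * d)) * d := by rw [← h3]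
      _ = a * (a * d ^ 2) := by rw [sq]; noncomm_ring
      _ = a * d := by rw [h2]
  have hgx : a ^ (k+1) * d ^ (k+1) = a * d := by
    rw [← hax.mul_pow, he2.pow_succ_eq k]
  have hxg : d ^ (k+1) * a ^ (k+1) = a * d := by
    rw [← (hax.pow_pow (k+1) (k+1)).eq, hgx]
  have hake : a ^ k * (a * d) = a ^ k := by
    calc a ^ k * (a * d) = (a ^ k * a) * d := by noncomm_ring
      _ = a ^ (k+1) * d := by rw [← pow_succ]
      _ = d * a ^ (k+1) := (hax.pow_left (k+1)).eq
      _ = a ^ k := h1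
  have hane : a ^ (k+1) * (a * d) = a ^ (k+1) := by
    calc a ^ (k+1) * (a * d) = (a * a ^ k) * (a * d) := by rw [← pow_succ']
      _ = a * (a ^ k * (a * d)) := by noncomm_ring
      _ = a * a ^ k := by rw [hake]
      _ = a ^ (k+1) := (pow_succ' a k).symm
  have hea : (a * d) * a ^ (k+1) = a ^ (k+1) := by
    calc (a * d) * a ^ (k+1) = a * (d * a ^ (k+1)) := by noncomm_ring
      _ = a * a ^ k := by rw [h1]
      _ = a ^ (k+1) := (pow_succ' a k).symm
  have hed : (a * d) * d = d := by
    calc (a * d) * d = a * d ^ 2 := by rw [sq]; noncomm_ring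
      _ = d := h2
  have hex : (a * d) * d ^ (k+1) = d ^ (k+1) := by
    calc (a * d) * d ^ (k+1) = (a * d) * (d * d ^ k) := by rw [← pow_succ']
      _ = ((a * d) * d) * d ^ k := by noncomm_ring
      _ = d * d ^ k := by rw [hed]
      _ = d ^ (k+1) := (pow_succ' d k).symm
  refine ⟨k+1, Nat.le_add_left _ _, d ^ (k+1), ⟨?_, ?_, ?_, ?_⟩, ⟨?_, ?_, ?_⟩⟩
  · rw [hgx, hea]
  · rw [hxg, hex]
  · rw [hgx]; exact hst
  · rw [hxg]; exact hst
  · rw [hgx, hea]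
  · rw [hxg, hex]
  · rw [hgx, hxg]

lemma drazin_of_isStarDMP {a : A} (ha : IsStarDMP a) :
    ∃ d : A, IsDrazin a d ∧ star (a * d) = a * d := by
  obtain ⟨n, hn, x, ⟨M1, M2, M3, M4⟩, ⟨G1, G2, G3⟩⟩ := ha
  obtain ⟨m, rfl⟩ : ∃ m, n = m + 1 := ⟨n - 1, by omega⟩
  have hx1 : x * (a ^ (m+1)) ^ 2 = a ^ (m+1) := by
    calc x * (a ^ (m+1)) ^ 2 = (x * a ^ (m+1)) * a ^ (m+1) := by rw [sq]; noncomm_ring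
      _ = (a ^ (m+1) * x) * a ^ (m+1) := by rw [← G3]
      _ = a ^ (m+1) := G1
  have hx2 : a ^ (m+1) * x ^ 2 = x := by
    calc a ^ (m+1) * x ^ 2 = (a ^ (m+1) * x) * x := by rw [sq]; noncomm_ring
      _ = x * a ^ (m+1) * x := by rw [G3]
      _ = x := G2
  have hgd : IsDrazin (a ^ (m+1)) x := by
    refine ⟨1, ?_, hx2, G3⟩
    rw [pow_one]
    calc x * (a ^ (m+1)) ^ (1+1) = x * (a ^ (m+1)) ^ 2 := by norm_num
      _ = a ^ (m+1) := hx1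
  have hax : a * x = x * a :=
    drazin_comm hgd (pow_mul_self a (m+1)).symm
  have haxc : Commute a x := hax
  refine ⟨a ^ m * x, ⟨m + 1, ?_, ?_, ?_⟩, ?_⟩
  · calc (a ^ m * x) * a ^ (m + 1 + 1) = (x * a ^ m) * a ^ (m+1+1) := by
          rw [(haxc.pow_left m).eq]
      _ = x * (a ^ m * a ^ (m+1+1)) := by noncomm_ring
      _ = x * a ^ (m + (m+1+1)) := by rw [← pow_add]
      _ = x * (a ^ (m+1)) ^ 2 := by
            have hmm : m + (m+1+1) = (m+1) * 2 := by omega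
            rw [hmm, pow_mul]
      _ = a ^ (m+1) := hx1
  · calc a * (a ^ m * x) ^ 2 = a * ((a ^ m * x) * (a ^ m * x)) := by rw [sq]
      _ = a * (a ^ m * ((x * a ^ m) * x)) := by noncomm_ring
      _ = a * (a ^ m * ((a ^ m * x) * x)) := by rw [(haxc.pow_left m).eq]
      _ = (a * (a ^ m * a ^ m)) * x ^ 2 := by rw [sq]; noncomm_ring
      _ = ((a * a ^ m) * a ^ m) * x ^ 2 := by noncomm_ring
      _ = (a ^ (m+1) * a ^ m) * x ^ 2 := by rw [← pow_succ']
      _ = a ^ m * (a ^ (m+1) * x ^ 2) := by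
            rw [(((Commute.refl a).pow_pow (m+1) m).eq)]; noncomm_ring
      _ = a ^ m * x := by rw [hx2]
  · calc a * (a ^ m * x) = (a * a ^ m) * x := by noncomm_ring
      _ = a ^ (m+1) * x := by rw [← pow_succ']
      _ = (a ^ m * a) * x := by rw [pow_succ]
      _ = a ^ m * (a * x) := by noncomm_ring
      _ = a ^ m * (x * a) := by rw [hax]
      _ = (a ^ m * x) * a := by noncomm_ring
  · have : a * (a ^ m * x) = a ^ (m+1) * x := by
      calc a * (a ^ m * x) = (a * a ^ m) * x := by noncomm_ring
        _ = a ^ (m+1) * x := by rw [← pow_succ']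
    rw [this]; exact M3

end Helpers3

section CommClosure
variable {A : Type*} [Ring A]

lemma closure_comm {F : Set A} (hF : ∀ x ∈ F, ∀ y ∈ F, x * y = y * x) :
    ∀ x ∈ Subring.closure F, ∀ y ∈ Subring.closure F, x * y = y * x := by
  have h1 : Subring.closure F ≤ Subring.centralizer F :=
    Subring.closure_le.mpr fun f hf =>
      Subring.mem_centralizer_iff.mpr fun g hg => hF g hg f hf
  intro x hx y hy
  have hx' : ∀ g ∈ F, g * x = x * g := Subring.mem_centralizer_iff.mp (h1 hx)
  have h2 : Subring.closure F ≤ Subring.centralizer {x} :=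
    Subring.closure_le.mpr fun f hf =>
      Subring.mem_centralizer_iff.mpr fun g hg => by
        rw [Set.mem_singleton_iff] at hg; subst hg; exact (hx' f hf).symm
  exact Subring.mem_centralizer_iff.mp (h2 hy) x rfl

abbrev commRingClosure {F : Set A} (hF : ∀ x ∈ F, ∀ y ∈ F, x * y = y * x) :
    CommRing (Subring.closure F) :=
  { (inferInstance : Ring (Subring.closure F)) with
    mul_comm := fun x y => Subtype.ext (closure_comm hF x.1 x.2 y.1 y.2) }

end CommClosure


variable {A : Type*} [NormedRing A] [StarRing A] [NormedAlgebra ℂ A] [CompleteSpace A]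

theorem stmt5 (a b aD : A) (ha : IsStarDMP a) (hb : IsStarDMP b)
    (haD : IsDrazin a aD)
    (hab : a * b = b * a) (hsb : star a * b = b * star a) :
    IsStarDMP (a + b) ↔ IsStarDMP (1 + aD * b) := by
  constructor
  · intro hs
    -- star projection of a
    have pa : star (a * aD) = a * aD := by
      obtain ⟨d, hd, hdst⟩ := drazin_of_isStarDMP ha
      rw [drazin_proj_unique haD hd]; exact hdst
    obtain ⟨sD, hsD, hsst⟩ := drazin_of_isStarDMP hs
    obtain ⟨K, hK1, hK2, hK3⟩ := haD
    have haD' : IsDrazin a aD := ⟨K, hK1, hK2, hK3⟩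
    obtain ⟨M, hM1, hM2, hM3⟩ := hsD
    have hsD' : IsDrazin (a + b) sD := ⟨M, hM1, hM2, hM3⟩
    -- commutation facts in A
    have hba : b * a = a * b := hab.symm
    have hbaD : b * aD = aD * b := drazin_comm haD' hba
    have haDb : aD * b = b * aD := hbaD.symm
    have hsa : a * (a + b) = (a + b) * a := by rw [mul_add, add_mul, hab]
    have hsb' : b * (a + b) = (a + b) * b := by rw [mul_add, add_mul, hba]
    have hsaD : aD * (a + b) = (a + b) * aD := by
      rw [mul_add, add_mul, haDb, ← hK3]
    have hasD : a * sD = sD * a := drazin_comm hsD' hsa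
    have hbsD : b * sD = sD * b := drazin_comm hsD' hsb'
    have haDsD : aD * sD = sD * aD := drazin_comm hsD' hsaD
    -- the commuting family
    have hF : ∀ x ∈ ({a, b, aD, sD} : Set A), ∀ y ∈ ({a, b, aD, sD} : Set A), x * y = y * x := by
      intro x hx y hy
      simp only [Set.mem_insert_iff, Set.mem_singleton_iff] at hx hy
      rcases hx with rfl | rfl | rfl | rfl <;> rcases hy with rfl | rfl | rfl | rfl <;>
        first
          | rfl
          | exact hab | exact hba | exact hK3 | exact hK3.symm
          | exact hbaD | exact haDb | exact hasD | exact hasD.symm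
          | exact hbsD | exact hbsD.symm | exact haDsD | exact haDsD.symm
    letI : CommRing ↥(Subring.closure ({a, b, aD, sD} : Set A)) := commRingClosure hF
    let a' : ↥(Subring.closure ({a, b, aD, sD} : Set A)) := ⟨a, Subring.subset_closure (by simp)⟩
    let b' : ↥(Subring.closure ({a, b, aD, sD} : Set A)) := ⟨b, Subring.subset_closure (by simp)⟩
    let d' : ↥(Subring.closure ({a, b, aD, sD} : Set A)) := ⟨aD, Subring.subset_closure (by simp)⟩
    let σ' : ↥(Subring.closure ({a, b, aD, sD} : Set A)) := ⟨sD, Subring.subset_closure (by simp)⟩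
    -- relations in S
    have R1 : a' * d' ^ 2 = d' := Subtype.ext hK2
    have R3 : σ' * (a' + b') ^ (M + 1) = (a' + b') ^ M := Subtype.ext hM1
    have R4 : (a' + b') * σ' ^ 2 = σ' := Subtype.ext hM2
    -- theta
    have theta : ∀ m : ℕ, (1 + d' * b') ^ m
        = 1 - a' * d' + d' ^ m * (a' + b') ^ m * (a' * d') := by
      intro m
      induction m with
      | zero => simp
      | succ m ih =>
          rw [pow_succ, ih, pow_succ, pow_succ (a' + b')]
          linear_combination (norm := ring_nf) (-(b') - (a'+b')^m * d'^m * a') * R1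
    have E1 : (1 + d' * b') * (1 - a' * d' + a' * σ' * (a' * d'))
        = 1 - a' * d' + (a' + b') * σ' * (a' * d') := by
      linear_combination (norm := ring_nf) (-b' - a'^2*σ' + (a'+b')*σ'*a') * R1
    have G2 : (1 + d' * b') * (1 - a' * d' + a' * σ' * (a' * d')) ^ 2
        = 1 - a' * d' + a' * σ' * (a' * d') := by
      rw [pow_two, ← mul_assoc, E1]
      linear_combination (norm := ring_nf)
        (a' - a'^2*σ' - a'*(a'+b')*σ' + a'^2*(a'+b')*σ'^2) * R1 + (a'^2*d') * R4
    have G1 : (1 - a' * d' + a' * σ' * (a' * d')) * (1 + d' * b') ^ (M + 1)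
        = (1 + d' * b') ^ M := by
      rw [theta (M+1), theta M]
      linear_combination (norm := ring_nf)
        (a' - a'*d'*(a'+b')*(d'^M*(a'+b')^M) - a'^2*σ' + a'*(d'^M*(a'+b')^M)
          + a'^2*σ'*d'^M*d'*(a'+b')^M*(a'+b')) * R1
        + (a'^2*d'^2*d'^M) * R3
    -- push down to A
    have G1A : ((1 - a' * d' + a' * σ' * (a' * d') : _) : A) * (1 + aD * b) ^ (M + 1)
        = (1 + aD * b) ^ M := congrArg Subtype.val G1
    have G2A : (1 + aD * b) * ((1 - a' * d' + a' * σ' * (a' * d') : _) : A) ^ 2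
        = ((1 - a' * d' + a' * σ' * (a' * d') : _) : A) := congrArg Subtype.val G2
    have G3A : (1 + aD * b) * ((1 - a' * d' + a' * σ' * (a' * d') : _) : A)
        = ((1 - a' * d' + a' * σ' * (a' * d') : _) : A) * (1 + aD * b) :=
      congrArg Subtype.val (mul_comm (1 + d' * b') (1 - a' * d' + a' * σ' * (a' * d')))
    have E1A : (1 + aD * b) * ((1 - a' * d' + a' * σ' * (a' * d') : _) : A)
        = 1 - a * aD + (a + b) * sD * (a * aD) := congrArg Subtype.val E1
    have hcommA : (a * aD) * ((a + b) * sD) = ((a + b) * sD) * (a * aD) :=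
      congrArg Subtype.val (mul_comm (a' * d') ((a' + b') * σ'))
    refine isStarDMP_of_drazin (⟨M, G1A, G2A, G3A⟩ : IsDrazin (1 + aD * b) _) ?_
    rw [E1A, star_add, star_sub, star_one, pa, star_mul, pa, hsst, hcommA]
  · intro ht
    have pa : star (a * aD) = a * aD := by
      obtain ⟨d, hd, hdst⟩ := drazin_of_isStarDMP ha
      rw [drazin_proj_unique haD hd]; exact hdst
    obtain ⟨bD, hbD0, hbst⟩ := drazin_of_isStarDMP hb
    obtain ⟨L, hL1, hL2, hL3⟩ := hbD0
    have hbD' : IsDrazin b bD := ⟨L, hL1, hL2, hL3⟩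
    obtain ⟨tD, htD0, htst⟩ := drazin_of_isStarDMP ht
    obtain ⟨M, hM1, hM2, hM3⟩ := htD0
    have htD' : IsDrazin (1 + aD * b) tD := ⟨M, hM1, hM2, hM3⟩
    obtain ⟨K, hK1, hK2, hK3⟩ := haD
    have haD' : IsDrazin a aD := ⟨K, hK1, hK2, hK3⟩
    -- commutation facts in A
    have hba : b * a = a * b := hab.symm
    have hbaD : b * aD = aD * b := drazin_comm haD' hba
    have haDb : aD * b = b * aD := hbaD.symm
    have habD : a * bD = bD * a := drazin_comm hbD' hab
    have hbDa : bD * a = a * bD := habD.symm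
    have haDbD : aD * bD = bD * aD := drazin_comm hbD' haDb
    have hbDbD : bD * aD = aD * bD := haDbD.symm
    have hta : a * (1 + aD * b) = (1 + aD * b) * a := by
      have h1 : a * (aD * b) = (aD * b) * a := by
        rw [← mul_assoc, hK3, mul_assoc, hab, ← mul_assoc]
      rw [mul_add, add_mul, mul_one, one_mul, h1]
    have htb : b * (1 + aD * b) = (1 + aD * b) * b := by
      have h1 : b * (aD * b) = (aD * b) * b := by
        rw [← mul_assoc, hbaD]
      rw [mul_add, add_mul, mul_one, one_mul, h1]
    have htaD : aD * (1 + aD * b) = (1 + aD * b) * aD := by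
      have h1 : aD * (aD * b) = (aD * b) * aD := by
        rw [mul_assoc, hbaD, ← mul_assoc]
      rw [mul_add, add_mul, mul_one, one_mul, h1]
    have htbD : bD * (1 + aD * b) = (1 + aD * b) * bD := by
      have h1 : bD * (aD * b) = (aD * b) * bD := by
        rw [← mul_assoc, ← haDbD, mul_assoc, ← hL3, ← mul_assoc]
      rw [mul_add, add_mul, mul_one, one_mul, h1]
    have htDa : a * tD = tD * a := drazin_comm htD' hta
    have htDb : b * tD = tD * b := drazin_comm htD' htb
    have htDaD : aD * tD = tD * aD := drazin_comm htD' htaD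
    have htDbD : bD * tD = tD * bD := drazin_comm htD' htbD
    have hF : ∀ x ∈ ({a, b, aD, bD, tD} : Set A), ∀ y ∈ ({a, b, aD, bD, tD} : Set A),
        x * y = y * x := by
      intro x hx y hy
      simp only [Set.mem_insert_iff, Set.mem_singleton_iff] at hx hy
      rcases hx with rfl | rfl | rfl | rfl | rfl <;> rcases hy with rfl | rfl | rfl | rfl | rfl <;>
        first
          | rfl
          | exact hab | exact hba | exact hK3 | exact hK3.symm
          | exact hbaD | exact haDb | exact habD | exact hbDa
          | exact hL3 | exact hL3.symm | exact haDbD | exact hbDbD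
          | exact htDa | exact htDa.symm | exact htDb | exact htDb.symm
          | exact htDaD | exact htDaD.symm | exact htDbD | exact htDbD.symm
    letI : CommRing ↥(Subring.closure ({a, b, aD, bD, tD} : Set A)) := commRingClosure hF
    let a' : ↥(Subring.closure ({a, b, aD, bD, tD} : Set A)) := ⟨a, Subring.subset_closure (by simp)⟩
    let b' : ↥(Subring.closure ({a, b, aD, bD, tD} : Set A)) := ⟨b, Subring.subset_closure (by simp)⟩
    let d' : ↥(Subring.closure ({a, b, aD, bD, tD} : Set A)) := ⟨aD, Subring.subset_closure (by simp)⟩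
    let e' : ↥(Subring.closure ({a, b, aD, bD, tD} : Set A)) := ⟨bD, Subring.subset_closure (by simp)⟩
    let τ' : ↥(Subring.closure ({a, b, aD, bD, tD} : Set A)) := ⟨tD, Subring.subset_closure (by simp)⟩
    -- relations
    have R1 : a' * d' ^ 2 = d' := Subtype.ext hK2
    have R2 : d' * a' ^ (K + 1) = a' ^ K := Subtype.ext hK1
    have R3 : b' * e' ^ 2 = e' := Subtype.ext hL2
    have R4 : e' * b' ^ (L + 1) = b' ^ L := Subtype.ext hL1
    have R5 : (1 + d' * b') * τ' ^ 2 = τ' := Subtype.ext hM2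
    have R6k : τ' * (1 + d' * b') ^ (M + (K + L) + 1) = (1 + d' * b') ^ (M + (K + L)) :=
      Subtype.ext (drazin_aux1 hM1 (Nat.le_add_right M (K + L)))
    -- nilpotency facts
    have np : a' ^ K * (1 - a' * d') = 0 := by linear_combination (-1 : _) * R2
    have nq : b' ^ L * (1 - b' * e') = 0 := by linear_combination (-1 : _) * R4
    have hqz : (b' * e' - 1) * (e' * a') = 0 := by linear_combination a' * R3
    have geom' : (∑ i ∈ Finset.range K, (-(e' * a')) ^ i) * (1 + e' * a')
        = 1 - (-(e' * a')) ^ K := by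
      linear_combination (-1 : _) * geom_sum_mul (-(e' * a')) K
    have zK : (-(e' * a')) ^ K * (1 - a' * d') = 0 := by
      calc (-(e' * a')) ^ K * (1 - a' * d')
          = (-1) ^ K * e' ^ K * (a' ^ K * (1 - a' * d')) := by ring
        _ = 0 := by rw [np, mul_zero]
    have C0 : (1 + e' * a') * ((∑ i ∈ Finset.range K, (-(e' * a')) ^ i) * (1 - a' * d'))
        = 1 - a' * d' := by
      linear_combination (1 - a' * d') * geom' - zK
    have keyq : (b' * e' - 1) * ((∑ i ∈ Finset.range K, (-(e' * a')) ^ i) - 1)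
        * (1 - a' * d') = 0 := by
      cases K with
      | zero =>
          have h0 : (1 : _) - a' * d' = 0 := by simpa using np
          rw [h0, mul_zero]
      | succ K' =>
          rw [geom_sum_succ]
          linear_combination (-(∑ i ∈ Finset.range K', (-(e' * a')) ^ i) * (1 - a' * d')) * hqz
    have Cq : (b' * e' - 1) * ((∑ i ∈ Finset.range K, (-(e' * a')) ^ i) * (1 - a' * d'))
        = (b' * e' - 1) * (1 - a' * d') := by
      linear_combination keyq
    have H1 : (a' + b') * (τ' * d' * (a' * d')
          + e' * ((∑ i ∈ Finset.range K, (-(e' * a')) ^ i) * (1 - a' * d')))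
        = (1 + d' * b') * τ' * (a' * d') + (b' * e') * (1 - a' * d') := by
      linear_combination (τ' * a') * R1 + C0 + Cq
    have H2' : ((1 + d' * b') * τ' * (a' * d') + (b' * e') * (1 - a' * d'))
          * (τ' * d' * (a' * d')
            + e' * ((∑ i ∈ Finset.range K, (-(e' * a')) ^ i) * (1 - a' * d')))
        = τ' * d' * (a' * d')
            + e' * ((∑ i ∈ Finset.range K, (-(e' * a')) ^ i) * (1 - a' * d')) := by
      linear_combination (a' * d' ^ 2) * R5
        + ((1 + d' * b') * τ' ^ 2 * d' * a'
          - (1 + d' * b') * τ' * e' * (∑ i ∈ Finset.range K, (-(e' * a')) ^ i) * a'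
          - (b' * e') * τ' * d' * a'
          + (b' * e') * e' * (∑ i ∈ Finset.range K, (-(e' * a')) ^ i) * a') * R1
        + ((∑ i ∈ Finset.range K, (-(e' * a')) ^ i) * (1 - a' * d')) * R3
    have H2 : (a' + b') * (τ' * d' * (a' * d')
          + e' * ((∑ i ∈ Finset.range K, (-(e' * a')) ^ i) * (1 - a' * d'))) ^ 2
        = τ' * d' * (a' * d')
          + e' * ((∑ i ∈ Finset.range K, (-(e' * a')) ^ i) * (1 - a' * d')) := by
      rw [pow_two, ← mul_assoc, H1]; exact H2'
    have lam : ∀ m : ℕ, (a' + b') ^ m * (a' * d')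
        = a' ^ m * (1 + d' * b') ^ m * (a' * d') := by
      intro m
      induction m with
      | zero => simp
      | succ m ih =>
          rw [pow_succ (a' + b'), pow_succ a', pow_succ (1 + d' * b')]
          linear_combination (a' + b') * ih + (-(a' ^ m * (1 + d' * b') ^ m * b' * a')) * R1
    have H3a : (1 + d' * b') * τ' * (a' * d') * (a' + b') ^ (M + (K + L))
        = (a' + b') ^ (M + (K + L)) * (a' * d') := by
      linear_combination ((1 + d' * b') * τ' - 1) * lam (M + (K + L))
        + (a' ^ (M + (K + L)) * (a' * d')) * R6k
    have nil : (a' + b') ^ (K + L) * ((1 - a' * d') * (1 - b' * e')) = 0 := by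
      rw [add_pow, Finset.sum_mul]
      apply Finset.sum_eq_zero
      intro i hi
      by_cases hiK : K ≤ i
      · obtain ⟨j, rfl⟩ := Nat.exists_eq_add_of_le hiK
        linear_combination (a' ^ j * b' ^ (K + L - (K + j))
          * (((K + L).choose (K + j) : ℕ) : _) * (1 - b' * e')) * np
      · obtain ⟨j, hj⟩ : ∃ j, K + L - i = L + j := ⟨K - i, by omega⟩
        rw [hj]
        linear_combination (a' ^ i * b' ^ j * (((K + L).choose i : ℕ) : _) * (1 - a' * d')) * nq
    have nil' : (a' + b') ^ (M + (K + L)) * ((1 - a' * d') * (1 - b' * e')) = 0 := by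
      rw [pow_add, mul_assoc, nil, mul_zero]
    have H3b : (b' * e') * (1 - a' * d') * (a' + b') ^ (M + (K + L))
        = (a' + b') ^ (M + (K + L)) * (1 - a' * d') := by
      linear_combination (-1 : _) * nil'
    have H3 : (τ' * d' * (a' * d')
          + e' * ((∑ i ∈ Finset.range K, (-(e' * a')) ^ i) * (1 - a' * d')))
          * (a' + b') ^ (M + (K + L) + 1)
        = (a' + b') ^ (M + (K + L)) := by
      linear_combination ((a' + b') ^ (M + (K + L))) * H1 + H3a + H3b
    -- push down to A
    have H3A : ((τ' * d' * (a' * d')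
          + e' * ((∑ i ∈ Finset.range K, (-(e' * a')) ^ i) * (1 - a' * d')) : _) : A)
          * (a + b) ^ (M + (K + L) + 1)
        = (a + b) ^ (M + (K + L)) := congrArg Subtype.val H3
    have H2A : (a + b) * ((τ' * d' * (a' * d')
          + e' * ((∑ i ∈ Finset.range K, (-(e' * a')) ^ i) * (1 - a' * d')) : _) : A) ^ 2
        = ((τ' * d' * (a' * d')
          + e' * ((∑ i ∈ Finset.range K, (-(e' * a')) ^ i) * (1 - a' * d')) : _) : A) :=
      congrArg Subtype.val H2
    have HcA : (a + b) * ((τ' * d' * (a' * d')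
          + e' * ((∑ i ∈ Finset.range K, (-(e' * a')) ^ i) * (1 - a' * d')) : _) : A)
        = ((τ' * d' * (a' * d')
          + e' * ((∑ i ∈ Finset.range K, (-(e' * a')) ^ i) * (1 - a' * d')) : _) : A)
          * (a + b) :=
      congrArg Subtype.val (mul_comm (a' + b') _)
    have H1A : (a + b) * ((τ' * d' * (a' * d')
          + e' * ((∑ i ∈ Finset.range K, (-(e' * a')) ^ i) * (1 - a' * d')) : _) : A)
        = (1 + aD * b) * tD * (a * aD) + (b * bD) * (1 - a * aD) := congrArg Subtype.val H1
    have comm1A : (a * aD) * ((1 + aD * b) * tD) = ((1 + aD * b) * tD) * (a * aD) :=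
      congrArg Subtype.val (mul_comm (a' * d') ((1 + d' * b') * τ'))
    have comm2A : (1 - a * aD) * (b * bD) = (b * bD) * (1 - a * aD) :=
      congrArg Subtype.val (mul_comm (1 - a' * d') (b' * e'))
    refine isStarDMP_of_drazin (⟨M + (K + L), H3A, H2A, HcA⟩ : IsDrazin (a + b) _) ?_
    rw [H1A, star_add, star_mul, pa, htst, star_mul, star_sub, star_one, pa, hbst,
      comm1A, comm2A]
end

section
/- Let A be a complex Banach *-algebra with identity, and let a, b ∈ A be Drazin invertible with ab = ba. If 1 + a^D b is Drazin invertible, then a + b is Drazin invertible and the spectral idempotent satisfies (a+b)^π = a a^D (1 + a^D b)^π + a^π b^π. -/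
variable {A : Type*} [NormedRing A] [StarRing A] [NormedAlgebra ℂ A] [CompleteSpace A]

lemma drazin_comm_s10 {R : Type*} [Ring R] {a x u : R} (h : IsDrazin a x) (hu : u * a = a * u) :
    u * x = x * u := by
  obtain ⟨k, h1, h2, h3⟩ := h
  have hax : Commute a x := h3
  have hua : Commute u a := hu
  have h1' : a ^ (k+1) * x = a ^ k := ((hax.pow_left (k+1)).eq).trans h1
  have hxn : ∀ n : ℕ, a ^ n * x ^ (n+1) = x := by
    intro n
    induction n with
    | zero => simp
    | succ n ih =>
      have e1 : x ^ (n+1+1) = x^2 * x^n := by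
        rw [show n+1+1 = 2+n from by omega, pow_add]
      calc a^(n+1) * x^(n+1+1) = a^n * (a * x^2 * x^n) := by
            rw [e1, pow_succ]
            noncomm_ring
        _ = a^n * (x * x^n) := by rw [h2]
        _ = a^n * x^(n+1) := by rw [← pow_succ']
        _ = x := ih
  have hd1 : a^(k+1) * (x*u - u*x) = 0 := by
    have e1 : a^(k+1)*(x*u) = a^k*u := by rw [← mul_assoc, h1']
    have e2 : a^(k+1)*(u*x) = a^k*u := by
      calc a^(k+1)*(u*x) = (a^(k+1)*u)*x := by rw [mul_assoc]
        _ = (u*a^(k+1))*x := by rw [(hua.pow_right (k+1)).eq]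
        _ = u*(a^(k+1)*x) := by rw [mul_assoc]
        _ = u*a^k := by rw [h1']
        _ = a^k*u := (hua.pow_right k).eq
    rw [mul_sub, e1, e2, sub_self]
  have hdn : ∀ n : ℕ, a^(k+1) * (x^n*u - u*x^n) = 0 := by
    intro n
    induction n with
    | zero => simp
    | succ n ih =>
      have split : x^(n+1)*u - u*x^(n+1) = x^n*(x*u - u*x) + (x^n*u - u*x^n)*x := by
        rw [pow_succ]
        noncomm_ring
      have t1 : a^(k+1)*(x^n*(x*u - u*x)) = x^n*(a^(k+1)*(x*u-u*x)) := by
        rw [← mul_assoc, (hax.pow_pow (k+1) n).eq, mul_assoc]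
      rw [split, mul_add, t1, hd1, mul_zero, zero_add, ← mul_assoc, ih, zero_mul]
  have final : x*u - u*x = 0 := by
    have e0 : a^(k+1)*x^(k+1+1) = x := hxn (k+1)
    have e1 : x*u = a^(k+1)*(x^(k+1+1)*u) := by rw [← mul_assoc, e0]
    have e2 : u*x = a^(k+1)*(u*x^(k+1+1)) := by
      calc u*x = u*(a^(k+1)*x^(k+1+1)) := by rw [e0]
        _ = (u*a^(k+1))*x^(k+1+1) := by rw [mul_assoc]
        _ = (a^(k+1)*u)*x^(k+1+1) := by rw [(hua.pow_right (k+1)).eq]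
        _ = a^(k+1)*(u*x^(k+1+1)) := by rw [mul_assoc]
    rw [e1, e2, ← mul_sub]
    exact hdn (k+1+1)
  have := sub_eq_zero.mp final
  exact this.symm

lemma comm_main {R : Type*} [CommRing R] (A B AD BD C : R) (ka kb kc : ℕ)
    (hA1 : AD * A ^ (ka+1) = A ^ ka) (hA2 : A * AD ^ 2 = AD)
    (hB1 : BD * B ^ (kb+1) = B ^ kb) (hB2 : B * BD ^ 2 = BD)
    (hC1 : C * (1 + AD*B) ^ (kc+1) = (1 + AD*B) ^ kc)
    (hC2 : (1 + AD*B) * C ^ 2 = C) :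
    ∃ S : R,
      (S * (A+B) ^ (ka+kb+kc+1+1) = (A+B) ^ (ka+kb+kc+1) ∧
       (A+B) * S ^ 2 = S ∧ (A+B) * S = S * (A+B)) ∧
      1 - (A+B) * S = A*AD*(1 - (1+AD*B)*C) + (1 - A*AD)*(1 - B*BD) := by
  set W := 1 + AD*B with hW
  set m := ka + kb + kc + 1 with hm
  set T := ∑ i ∈ Finset.range ka, (-(A*BD))^i with hT
  set X := (-(A*BD))^ka with hX
  -- basic facts
  have hE : (A*AD)*(A*AD) = A*AD := by linear_combination A*hA2
  have hEAD : A*AD*AD = AD := by linear_combination hA2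
  have hBBD : (B*BD)*(B*BD) = B*BD := by linear_combination B*hB2
  have hAF : A^ka*(1 - A*AD) = 0 := by linear_combination -hA1
  have hBF : B^kb*(1 - B*BD) = 0 := by linear_combination -hB1
  have hCW : ∀ j : ℕ, C*W^(kc+j+1) = W^(kc+j) := by
    intro j
    induction j with
    | zero => simpa using hC1
    | succ j ih =>
      calc C*W^(kc+(j+1)+1) = (C*W^(kc+j+1))*W := by ring
        _ = W^(kc+j)*W := by rw [ih]
        _ = W^(kc+(j+1)) := by ring
  have hEW : (A*AD)*(A+B) = A*W*(A*AD) := by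
    rw [hW]; linear_combination (-(A*B))*hA2
  have hEpow : ∀ n : ℕ, (A*AD)*(A+B)^n = A^n*W^n*(A*AD) := by
    intro n
    induction n with
    | zero => ring
    | succ n ih =>
      calc (A*AD)*(A+B)^(n+1) = ((A*AD)*(A+B)^n)*(A+B) := by ring
        _ = (A^n*W^n*(A*AD))*(A+B) := by rw [ih]
        _ = A^n*W^n*((A*AD)*(A+B)) := by ring
        _ = A^n*W^n*(A*W*(A*AD)) := by rw [hEW]
        _ = A^(n+1)*W^(n+1)*(A*AD) := by ring
  have h0 : (A*BD)^ka*(1-A*AD) = 0 := by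
    rw [mul_pow]; linear_combination (BD^ka)*hAF
  have hXF : X*(1-A*AD) = 0 := by
    rw [hX, neg_pow, mul_assoc, h0, mul_zero]
  have hgeom : (1 + A*BD)*T = 1 - X := by
    have h := geom_sum_mul (-(A*BD)) ka
    rw [← hT, ← hX] at h
    linear_combination -h
  have hkey1 : (A+B)*(BD*T*((1-A*AD)*(B*BD))) = (1-A*AD)*(B*BD) := by
    have step1 : (A+B)*(BD*T*((1-A*AD)*(B*BD))) = ((1+A*BD)*T)*((1-A*AD)*(B*BD)) := by
      linear_combination (T*(1-A*AD))*hBBD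
    rw [step1, hgeom]
    linear_combination (-(B*BD))*hXF
  have hkey2 : (A+B)*(AD*C) = (A*AD)*(W*C) := by
    rw [hW]; linear_combination (-(B*C))*hA2
  have hFAD : (1-A*AD)*AD = 0 := by linear_combination -hA2
  have hs1s2 : (AD*C)*(BD*T*((1-A*AD)*(B*BD))) = 0 := by
    linear_combination (C*BD*T*(B*BD))*hFAD
  have hs1sq : (A+B)*((AD*C)*(AD*C)) = AD*C := by
    calc (A+B)*((AD*C)*(AD*C)) = ((A+B)*(AD*C))*(AD*C) := by ring
      _ = ((A*AD)*(W*C))*(AD*C) := by rw [hkey2]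
      _ = (A*AD*AD)*(W*C^2) := by ring
      _ = AD*(W*C^2) := by rw [hEAD]
      _ = AD*C := by rw [hC2]
  have hGG : ((1-A*AD)*(B*BD))*((1-A*AD)*(B*BD)) = (1-A*AD)*(B*BD) := by
    linear_combination ((1-A*AD)*(1-A*AD))*hBBD + (B*BD)*hE
  have hs2sq : (A+B)*((BD*T*((1-A*AD)*(B*BD)))*(BD*T*((1-A*AD)*(B*BD))))
      = BD*T*((1-A*AD)*(B*BD)) := by
    calc (A+B)*((BD*T*((1-A*AD)*(B*BD)))*(BD*T*((1-A*AD)*(B*BD))))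
        = ((A+B)*(BD*T*((1-A*AD)*(B*BD))))*(BD*T*((1-A*AD)*(B*BD))) := by ring
      _ = ((1-A*AD)*(B*BD))*(BD*T*((1-A*AD)*(B*BD))) := by rw [hkey1]
      _ = BD*T*(((1-A*AD)*(B*BD))*((1-A*AD)*(B*BD))) := by ring
      _ = BD*T*((1-A*AD)*(B*BD)) := by rw [hGG]
  have hCWm : C*W^(m+1) = W^m := by
    have h := hCW (ka+kb+1)
    have e1 : kc+(ka+kb+1) = m := by omega
    rw [e1] at h
    exact h
  have part1 : (AD*C)*(A+B)^(m+1) = (A+B)^m*(A*AD) := by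
    calc (AD*C)*(A+B)^(m+1) = (AD*C)*((A*AD)*(A+B)^(m+1)) := by
          linear_combination (-(C*(A+B)^(m+1)))*hEAD
      _ = (AD*C)*(A^(m+1)*W^(m+1)*(A*AD)) := by rw [hEpow]
      _ = (AD*A^(m+1))*(C*W^(m+1))*(A*AD) := by ring
      _ = (AD*A^(m+1))*W^m*(A*AD) := by rw [hCWm]
      _ = A^m*W^m*((A*AD)*(A*AD)) := by ring
      _ = A^m*W^m*(A*AD) := by rw [hE]
      _ = (A*AD)*(A+B)^m := (hEpow m).symm
      _ = (A+B)^m*(A*AD) := by ring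
  have part2 : (BD*T*((1-A*AD)*(B*BD)))*(A+B)^(m+1) = (A+B)^m*((1-A*AD)*(B*BD)) := by
    calc (BD*T*((1-A*AD)*(B*BD)))*(A+B)^(m+1)
        = (A+B)^m*((A+B)*(BD*T*((1-A*AD)*(B*BD)))) := by ring
      _ = (A+B)^m*((1-A*AD)*(B*BD)) := by rw [hkey1]
  have hn : (A+B)^(ka+kb)*((1-A*AD)*(1-B*BD)) = 0 := by
    rw [add_pow, Finset.sum_mul]
    refine Finset.sum_eq_zero fun i hi => ?_
    by_cases hka : ka ≤ i
    · obtain ⟨j, rfl⟩ := Nat.exists_eq_add_of_le hka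
      linear_combination (A^j*B^(ka+kb-(ka+j))*((ka+kb).choose (ka+j) : R)*(1-B*BD))*hAF
    · have e2 : ka+kb-i = kb+(ka-i) := by omega
      rw [e2]
      linear_combination (A^i*B^(ka-i)*((ka+kb).choose i : R)*(1-A*AD))*hBF
  have part3 : (A+B)^m*((1-A*AD)*(1-B*BD)) = 0 := by
    have e3 : m = (kc+1)+(ka+kb) := by omega
    rw [e3, pow_add]
    linear_combination ((A+B)^(kc+1))*hn
  refine ⟨AD*C + BD*T*((1-A*AD)*(B*BD)), ⟨?_, ?_, mul_comm _ _⟩, ?_⟩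
  · linear_combination part1 + part2 - part3
  · linear_combination hs1sq + hs2sq + (2*(A+B))*hs1s2
  · linear_combination -hkey2 - hkey1

theorem stmt10 (a b aD bD c : A)
    (haD : IsDrazin a aD) (hbD : IsDrazin b bD)
    (hab : a * b = b * a)
    (hc : IsDrazin (1 + aD * b) c) :
    ∃ s : A, IsDrazin (a + b) s ∧
      1 - (a + b) * s =
        a * aD * (1 - (1 + aD * b) * c) + (1 - a * aD) * (1 - b * bD) := by
  obtain ⟨ka, hA1, hA2, hA3⟩ := id haD
  obtain ⟨kb, hB1, hB2, hB3⟩ := id hbD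
  obtain ⟨kc, hC1, hC2, hC3⟩ := id hc
  -- pairwise commutation
  have e_a_aD : a * aD = aD * a := hA3
  have e_b_aD : b * aD = aD * b := drazin_comm_s10 haD hab.symm
  have e_a_bD : a * bD = bD * a := drazin_comm_s10 hbD hab
  have e_b_bD : b * bD = bD * b := hB3
  have e_aD_bD : aD * bD = bD * aD := drazin_comm_s10 hbD e_b_aD.symm
  have Cw_a : Commute a (1 + aD*b) :=
    (Commute.one_right a).add_right (Commute.mul_right (show Commute a aD from e_a_aD) (show Commute a b from hab))
  have Cw_b : Commute b (1 + aD*b) :=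
    (Commute.one_right b).add_right (Commute.mul_right (show Commute b aD from e_b_aD) (Commute.refl b))
  have Cw_aD : Commute aD (1 + aD*b) :=
    (Commute.one_right aD).add_right (Commute.mul_right (Commute.refl aD) (show Commute aD b from e_b_aD.symm))
  have Cw_bD : Commute bD (1 + aD*b) :=
    (Commute.one_right bD).add_right
      (Commute.mul_right (show Commute bD aD from e_aD_bD.symm) (show Commute bD b from e_b_bD.symm))
  have e_a_c : a * c = c * a := drazin_comm_s10 hc Cw_a.eq
  have e_b_c : b * c = c * b := drazin_comm_s10 hc Cw_b.eq
  have e_aD_c : aD * c = c * aD := drazin_comm_s10 hc Cw_aD.eq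
  have e_bD_c : bD * c = c * bD := drazin_comm_s10 hc Cw_bD.eq
  have hcomm : ∀ x ∈ ({a, b, aD, bD, c} : Set A), ∀ y ∈ ({a, b, aD, bD, c} : Set A),
      x * y = y * x := by
    rintro x hx y hy
    simp only [Set.mem_insert_iff, Set.mem_singleton_iff] at hx hy
    rcases hx with rfl | rfl | rfl | rfl | rfl <;> rcases hy with rfl | rfl | rfl | rfl | rfl <;>
      first | rfl | assumption | (apply Eq.symm; assumption)
  letI : CommRing (Algebra.adjoin ℂ ({a, b, aD, bD, c} : Set A)) :=
    Algebra.adjoinCommRingOfComm ℂ hcomm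
  obtain ⟨S', ⟨h1, h2, h3⟩, h4⟩ :=
    comm_main (R := Algebra.adjoin ℂ ({a, b, aD, bD, c} : Set A))
      ⟨a, Algebra.subset_adjoin (by simp)⟩ ⟨b, Algebra.subset_adjoin (by simp)⟩
      ⟨aD, Algebra.subset_adjoin (by simp)⟩ ⟨bD, Algebra.subset_adjoin (by simp)⟩
      ⟨c, Algebra.subset_adjoin (by simp)⟩ ka kb kc
      (Subtype.ext (by push_cast; exact hA1))
      (Subtype.ext (by push_cast; exact hA2))
      (Subtype.ext (by push_cast; exact hB1))
      (Subtype.ext (by push_cast; exact hB2))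
      (Subtype.ext (by push_cast; exact hC1))
      (Subtype.ext (by push_cast; exact hC2))
  refine ⟨(S' : A), ⟨ka + kb + kc + 1, ?_, ?_, ?_⟩, ?_⟩
  · have := congrArg (fun x : Algebra.adjoin ℂ ({a, b, aD, bD, c} : Set A) => (x : A)) h1
    push_cast at this
    exact this
  · have := congrArg (fun x : Algebra.adjoin ℂ ({a, b, aD, bD, c} : Set A) => (x : A)) h2
    push_cast at this
    exact this
  · have := congrArg (fun x : Algebra.adjoin ℂ ({a, b, aD, bD, c} : Set A) => (x : A)) h3
    push_cast at this
    exact this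
  · have := congrArg (fun x : Algebra.adjoin ℂ ({a, b, aD, bD, c} : Set A) => (x : A)) h4
    push_cast at this
    exact this
end

section
/- Let B, C ∈ ℂ^{n×n} be such that BC and CB are *-DMP (as elements of the Banach *-algebra ℂ^{n×n} with conjugate transpose involution). Then the block matrix Q = [[0, B], [C, 0]] ∈ ℂ^{2n×2n} is *-DMP. -/
lemma idem_pow {A : Type*} [Monoid A] {e : A} (he : e * e = e) :
    ∀ k, 1 ≤ k → e ^ k = e := by
  intro k hk
  induction k with
  | zero => omega
  | succ j ih =>
    rcases Nat.eq_zero_or_pos j with h | h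
    · simp [h]
    · rw [pow_succ, ih h, he]

lemma lift_pow {A : Type*} [Ring A] [StarRing A] {a x : A}
    (h1 : IsMP a x) (h2 : IsGroupInv a x) (k : ℕ) (hk : 1 ≤ k) :
    IsMP (a ^ k) (x ^ k) ∧ IsGroupInv (a ^ k) (x ^ k) := by
  obtain ⟨hm1, hm2, hs1, hs2⟩ := h1
  obtain ⟨-, -, hc⟩ := h2
  have hcomm : Commute a x := hc
  have hax_idem : a * x * (a * x) = a * x := by
    rw [← mul_assoc, hm1]
  have hax : a ^ k * x ^ k = a * x := by
    rw [← hcomm.mul_pow, idem_pow hax_idem k hk]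
  have hxa : x ^ k * a ^ k = a * x := by
    rw [← hcomm.symm.mul_pow, ← hc, idem_pow hax_idem k hk]
  obtain ⟨j, rfl⟩ : ∃ j, k = j + 1 := ⟨k - 1, by omega⟩
  have e1 : a ^ (j+1) * x ^ (j+1) * a ^ (j+1) = a ^ (j+1) := by
    rw [hax, pow_succ', ← mul_assoc, hm1, ← pow_succ']
  have e2 : x ^ (j+1) * a ^ (j+1) * x ^ (j+1) = x ^ (j+1) := by
    rw [hxa, hc, pow_succ', ← mul_assoc, hm2, ← pow_succ']
  refine ⟨⟨e1, e2, ?_, ?_⟩, e1, e2, ?_⟩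
  · rw [hax, hs1]
  · rw [hxa, hs1]
  · rw [hax, hxa]

lemma fromBlocks_diag_pow {n : ℕ} (M N : Matrix (Fin n) (Fin n) ℂ) (k : ℕ) :
    (Matrix.fromBlocks M 0 0 N) ^ k = Matrix.fromBlocks (M ^ k) 0 0 (N ^ k) := by
  induction k with
  | zero => simp [Matrix.fromBlocks_one]
  | succ j ih => simp [pow_succ, ih, Matrix.fromBlocks_multiply]

lemma star_fromBlocks {n : ℕ} (P Q : Matrix (Fin n) (Fin n) ℂ) :
    star (Matrix.fromBlocks P 0 0 Q) = Matrix.fromBlocks (star P) 0 0 (star Q) := by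
  simp [Matrix.star_eq_conjTranspose, Matrix.fromBlocks_conjTranspose]

lemma isMP_fromBlocks {n : ℕ} {M N X Y : Matrix (Fin n) (Fin n) ℂ}
    (h1 : IsMP M X) (h2 : IsMP N Y) :
    IsMP (Matrix.fromBlocks M 0 0 N) (Matrix.fromBlocks X 0 0 Y) := by
  obtain ⟨a1, a2, a3, a4⟩ := h1
  obtain ⟨b1, b2, b3, b4⟩ := h2
  refine ⟨?_, ?_, ?_, ?_⟩
  · simp [Matrix.fromBlocks_multiply, a1, b1]
  · simp [Matrix.fromBlocks_multiply, a2, b2]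
  · simp only [Matrix.fromBlocks_multiply, mul_zero, zero_mul, add_zero, zero_add,
      star_fromBlocks, a3, a4, b3, b4]
  · simp only [Matrix.fromBlocks_multiply, mul_zero, zero_mul, add_zero, zero_add,
      star_fromBlocks, a3, a4, b3, b4]

lemma isGroupInv_fromBlocks {n : ℕ} {M N X Y : Matrix (Fin n) (Fin n) ℂ}
    (h1 : IsGroupInv M X) (h2 : IsGroupInv N Y) :
    IsGroupInv (Matrix.fromBlocks M 0 0 N) (Matrix.fromBlocks X 0 0 Y) := by
  obtain ⟨a1, a2, a3⟩ := h1
  obtain ⟨b1, b2, b3⟩ := h2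
  refine ⟨?_, ?_, ?_⟩
  · simp [Matrix.fromBlocks_multiply, a1, b1]
  · simp [Matrix.fromBlocks_multiply, a2, b2]
  · simp [Matrix.fromBlocks_multiply, a3, b3]


variable {A : Type*} [NormedRing A] [StarRing A] [NormedAlgebra ℂ A] [CompleteSpace A]

theorem stmt11 {n : ℕ} (B C : Matrix (Fin n) (Fin n) ℂ)
    (hBC : IsStarDMP (B * C)) (hCB : IsStarDMP (C * B)) :
    IsStarDMP (Matrix.fromBlocks 0 B C 0) := by
  obtain ⟨n₁, hn₁, x, hx1, hx2⟩ := hBC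
  obtain ⟨n₂, hn₂, y, hy1, hy2⟩ := hCB
  have hx := lift_pow hx1 hx2 n₂ hn₂
  have hy := lift_pow hy1 hy2 n₁ hn₁
  rw [← pow_mul] at hx
  rw [← pow_mul, Nat.mul_comm n₂ n₁] at hy
  have hsq : (Matrix.fromBlocks 0 B C 0) ^ 2 = Matrix.fromBlocks (B * C) 0 0 (C * B) := by
    rw [sq, Matrix.fromBlocks_multiply]; simp
  have hpow : (Matrix.fromBlocks 0 B C 0) ^ (2 * (n₁ * n₂)) =
      Matrix.fromBlocks ((B * C) ^ (n₁ * n₂)) 0 0 ((C * B) ^ (n₁ * n₂)) := by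
    rw [pow_mul, hsq, fromBlocks_diag_pow]
  refine ⟨2 * (n₁ * n₂), by nlinarith, Matrix.fromBlocks (x ^ n₂) 0 0 (y ^ n₁), ?_, ?_⟩
  · rw [hpow]; exact isMP_fromBlocks hx.1 hy.1
  · rw [hpow]; exact isGroupInv_fromBlocks hx.2 hy.2
end

section
/- Let A be a complex Banach *-algebra with identity. If a ∈ A is *-DMP, then a² is *-DMP; conversely (as used in Lemma 4.1), if a² is *-DMP then a is *-DMP. -/
variable {A : Type*} [NormedRing A] [StarRing A] [NormedAlgebra ℂ A] [CompleteSpace A]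

private lemma ep_sq {R : Type*} [Ring R] [StarRing R] {b x : R}
    (hm : IsMP b x) (hg : IsGroupInv b x) :
    IsMP (b ^ 2) (x ^ 2) ∧ IsGroupInv (b ^ 2) (x ^ 2) := by
  obtain ⟨h1, h2, hs1, hs2⟩ := hm
  obtain ⟨-, -, hc⟩ := hg
  have hb2 : b ^ 2 * x ^ 2 = b * x := by
    calc b ^ 2 * x ^ 2 = b * (b * x) * x := by noncomm_ring
    _ = b * (x * b) * x := by rw [hc]
    _ = (b * x) * (b * x) := by noncomm_ring
    _ = (b * x * b) * x := by noncomm_ring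
    _ = b * x := by rw [h1]
  have hx2 : x ^ 2 * b ^ 2 = b * x := by
    calc x ^ 2 * b ^ 2 = x * (x * b) * b := by noncomm_ring
    _ = x * (b * x) * b := by rw [hc]
    _ = (x * b) * (x * b) := by noncomm_ring
    _ = (x * b * x) * b := by noncomm_ring
    _ = x * b := by rw [h2]
    _ = b * x := hc.symm
  have g1 : b ^ 2 * x ^ 2 * b ^ 2 = b ^ 2 := by
    rw [hb2]
    calc b * x * b ^ 2 = (b * x * b) * b := by noncomm_ring
    _ = b ^ 2 := by rw [h1]; noncomm_ring
  have g2 : x ^ 2 * b ^ 2 * x ^ 2 = x ^ 2 := by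
    rw [hx2, hc]
    calc x * b * x ^ 2 = (x * b * x) * x := by noncomm_ring
    _ = x ^ 2 := by rw [h2]; noncomm_ring
  refine ⟨⟨g1, g2, ?_, ?_⟩, g1, g2, hb2.trans hx2.symm⟩
  · rw [hb2, hs1]
  · rw [hx2, hs1]

theorem stmt12 (a : A) : IsStarDMP a ↔ IsStarDMP (a ^ 2) := by
  constructor
  · rintro ⟨n, hn, x, hm, hg⟩
    refine ⟨n, hn, x ^ 2, ?_⟩
    have h : (a ^ 2) ^ n = (a ^ n) ^ 2 := by rw [← pow_mul, ← pow_mul, Nat.mul_comm]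
    rw [h]
    exact ep_sq hm hg
  · rintro ⟨n, hn, x, hm, hg⟩
    refine ⟨2 * n, by omega, x, ?_⟩
    rw [pow_mul]; exact ⟨hm, hg⟩
end
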